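/- Let U be a diagonal n×n complex matrix with pairwise distinct diagonal entries and V a constant n×n complex matrix. If the system z²dψ/dz = (U - zV)ψ is holomorphically gauge-equivalent near z=0 to the system z²dψ/dz = Uψ, then the diagonal part of V is zero. -/
import Mathlib


open Matrix

/-- If `z² dψ/dz = (U - zV)ψ` is holomorphically gauge-equivalent near `z = 0`
to `z² dψ/dz = Uψ`, where `U` is diagonal with pairwise distinct entries, then the diagonal
part of `V` vanishes. -/
theorem statement1 {n : ℕ} (u : Fin n → ℂ) (hu : Function.Injective u)
    (V : Matrix (Fin n) (Fin n) ℂ) (r : ℝ) (hr : 0 < r)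
    (P P' : ℂ → Matrix (Fin n) (Fin n) ℂ)
    (hP : ∀ z ∈ Metric.ball (0 : ℂ) r, ∀ i j,
      HasDerivAt (fun w => P w i j) (P' z i j) z)
    (hPinv : ∀ z ∈ Metric.ball (0 : ℂ) r, IsUnit (P z))
    (hgauge : ∀ z ∈ Metric.ball (0 : ℂ) r,
      (z ^ 2) • P' z = (Matrix.diagonal u - z • V) * P z - P z * Matrix.diagonal u) :
    ∀ i, V i i = 0 := by
  have h0 : (0 : ℂ) ∈ Metric.ball (0 : ℂ) r := by simpa using hr
  -- At z = 0, P 0 commutes with diagonal u, hence is diagonal.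
  have hcomm : Matrix.diagonal u * P 0 = P 0 * Matrix.diagonal u := by
    have h := hgauge 0 h0
    simp only [ne_eq, OfNat.ofNat_ne_zero, not_false_eq_true, zero_pow, zero_smul,
      zero_sub, zero_smul, sub_zero] at h
    have h2 : (0 : Matrix (Fin n) (Fin n) ℂ)
        = Matrix.diagonal u * P 0 - P 0 * Matrix.diagonal u := by
      simpa using h
    exact sub_eq_zero.mp h2.symm
  have hoff : ∀ i j, i ≠ j → P 0 i j = 0 := by
    intro i j hij
    have := congrFun (congrFun hcomm i) j
    rw [Matrix.diagonal_mul, Matrix.mul_diagonal] at this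
    have huij : u i ≠ u j := fun h => hij (hu h)
    have : (u i - u j) * P 0 i j = 0 := by ring_nf; linear_combination this
    rcases mul_eq_zero.1 this with h | h
    · exact absurd (sub_eq_zero.1 h) huij
    · exact h
  have hPdiag : P 0 = Matrix.diagonal (fun i => P 0 i i) := by
    ext i j
    by_cases hij : i = j
    · subst hij; simp
    · simp [Matrix.diagonal_apply_ne _ hij, hoff i j hij]
  have hne : ∀ i, P 0 i i ≠ 0 := by
    intro i
    have hdet : (P 0).det ≠ 0 := by
      have := (Matrix.isUnit_iff_isUnit_det _).1 (hPinv 0 h0)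
      exact this.ne_zero
    rw [hPdiag, Matrix.det_diagonal] at hdet
    exact fun h => hdet (Finset.prod_eq_zero (Finset.mem_univ i) h)
  intro i
  -- The (i,i) entry of the gauge equation: z^2 * P' z i i = - z * (V * P z) i i
  have key : ∀ z ∈ Metric.ball (0 : ℂ) r,
      z ^ 2 * P' z i i = -(z * (V * P z) i i) := by
    intro z hz
    have := congrFun (congrFun (hgauge z hz) i) i
    simp only [Matrix.smul_apply, Matrix.sub_apply, Matrix.sub_mul, Matrix.smul_mul,
      Matrix.diagonal_mul, Matrix.mul_diagonal, smul_eq_mul] at this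
    linear_combination this
  -- f = (i,i) entry of P is holomorphic on the ball, so deriv f is analytic at 0
  set f : ℂ → ℂ := fun z => P z i i with hf
  have hdiff : DifferentiableOn ℂ f (Metric.ball (0 : ℂ) r) :=
    fun z hz => ((hP z hz i i).differentiableAt).differentiableWithinAt
  have hanal : AnalyticAt ℂ (deriv f) 0 :=
    ((hdiff.analyticOnNhd Metric.isOpen_ball).deriv) 0 h0
  have hderiv_eq : ∀ z ∈ Metric.ball (0 : ℂ) r, deriv f z = P' z i i :=
    fun z hz => (hP z hz i i).deriv
  -- g z = (V * P z) i i is continuous at 0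
  set g : ℂ → ℂ := fun z => (V * P z) i i with hg
  have hgcont : ContinuousAt g 0 := by
    have : ContinuousAt (fun z => ∑ k, V i k * P z k i) 0 := by
      apply tendsto_finset_sum
      intro k _
      exact (continuousAt_const.mul (hP 0 h0 k i).continuousAt).tendsto
    simpa [hg, Matrix.mul_apply] using this
  -- On the punctured neighborhood: g z = -(z * deriv f z)
  have hev : ∀ᶠ z in nhdsWithin (0 : ℂ) {(0 : ℂ)}ᶜ, g z = -(z * deriv f z) := by
    filter_upwards [self_mem_nhdsWithin,
      nhdsWithin_le_nhds (Metric.isOpen_ball.mem_nhds h0)] with z hz hzball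
    have hzne : z ≠ 0 := hz
    have hk := key z hzball
    rw [hderiv_eq z hzball]
    have hz2 : z * (g z + z * P' z i i) = z * 0 := by
      rw [mul_zero]; linear_combination hk
    have h3 := mul_left_cancel₀ hzne hz2
    linear_combination h3
  have h1 : Filter.Tendsto g (nhdsWithin (0 : ℂ) {(0 : ℂ)}ᶜ) (nhds (g 0)) :=
    hgcont.continuousWithinAt
  have h2 : Filter.Tendsto (fun z => -(z * deriv f z)) (nhdsWithin (0 : ℂ) {(0 : ℂ)}ᶜ)
      (nhds 0) := by
    have : Filter.Tendsto (fun z : ℂ => -(z * deriv f z)) (nhds 0)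
        (nhds (-(0 * deriv f 0))) :=
      ((continuousAt_id.mul hanal.continuousAt).neg)
    simpa using this.mono_left nhdsWithin_le_nhds
  have hg0 : g 0 = 0 :=
    tendsto_nhds_unique h1 (h2.congr' (Filter.EventuallyEq.symm hev))
  -- Finally, g 0 = V i i * P 0 i i
  have : V i i * P 0 i i = 0 := by
    have : g 0 = ∑ k, V i k * P 0 k i := by simp [hg, Matrix.mul_apply]
    rw [hg0] at this
    rw [Finset.sum_eq_single i] at this
    · exact this.symm
    · intro k _ hk; rw [hoff k i hk, mul_zero]
    · intro h; exact absurd (Finset.mem_univ i) h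
  exact (mul_eq_zero.1 this).resolve_right (hne i)
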